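/- For any two vertex-disjoint bipartite graphs G and G̃, each without isolated vertices, there exists a bipartite graph without isolated vertices having ν(G) + ν(G̃) + 4 vertices and exactly ι_m(G) + ι_m(G̃) maximal independent sets. -/

import Mathlib

/-- `s` is an independent set of vertices in `G`. -/
def IsIndep {V : Type*} (G : SimpleGraph V) (s : Finset V) : Prop :=
  ∀ u ∈ s, ∀ v ∈ s, ¬ G.Adj u v

/-- `s` is a maximal independent set in `G`. -/
def IsMaxIndep {V : Type*} (G : SimpleGraph V) (s : Finset V) : Prop :=
  IsIndep G s ∧ ∀ t : Finset V, IsIndep G t → s ⊆ t → s = t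

/-- `ι G`: the number of independent sets of `G` (including `∅`). -/
noncomputable def iota {V : Type*} [Fintype V] (G : SimpleGraph V) : ℕ :=
  Nat.card {s : Finset V // IsIndep G s}

/-- `ι_m G`: the number of maximal independent sets of `G`. -/
noncomputable def iotaM {V : Type*} [Fintype V] (G : SimpleGraph V) : ℕ :=
  Nat.card {s : Finset V // IsMaxIndep G s}

/-- `(L, R)` is a bipartition of `G`. -/
def IsBipartition {V : Type*} (G : SimpleGraph V) (L R : Finset V) : Prop :=
  Disjoint L R ∧ (∀ v : V, v ∈ L ∨ v ∈ R) ∧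
    ∀ u v : V, G.Adj u v → (u ∈ L ∧ v ∈ R) ∨ (u ∈ R ∧ v ∈ L)

/-- `G` is bipartite. -/
def IsBipartite {V : Type*} (G : SimpleGraph V) : Prop :=
  ∃ L R : Finset V, IsBipartition G L R

/-- `G` has no isolated vertices. -/
def NoIsolated {V : Type*} (G : SimpleGraph V) : Prop :=
  ∀ v : V, ∃ u : V, G.Adj v u


section Infra

lemma isMaxIndep_iff {V : Type*} (G : SimpleGraph V) (s : Finset V) :
    IsMaxIndep G s ↔ IsIndep G s ∧ ∀ v, v ∉ s → ∃ u ∈ s, G.Adj v u := by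
  classical
  constructor
  · rintro ⟨hi, hm⟩
    refine ⟨hi, fun v hv => ?_⟩
    by_contra h
    push_neg at h
    have hind : IsIndep G (insert v s) := by
      intro x hx y hy hadj
      rcases Finset.mem_insert.1 hx with hx' | hx' <;>
        rcases Finset.mem_insert.1 hy with hy' | hy'
      · exact G.loopless.irrefl v (by rwa [hx', hy'] at hadj)
      · exact h y hy' (by rwa [hx'] at hadj)
      · exact h x hx' (by rw [hy'] at hadj; exact hadj.symm)
      · exact hi x hx' y hy' hadj
    have := hm _ hind (Finset.subset_insert _ _)
    exact hv (this ▸ Finset.mem_insert_self v s)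
  · rintro ⟨hi, hm⟩
    refine ⟨hi, fun t ht hst => ?_⟩
    apply Finset.Subset.antisymm hst
    intro v hv
    by_contra hvs
    obtain ⟨u, hu, hadj⟩ := hm v hvs
    exact ht _ hv _ (hst hu) hadj

lemma iotaM_eq_ncard {V : Type*} [Fintype V] (G : SimpleGraph V) :
    iotaM G = {s : Finset V | IsMaxIndep G s}.ncard := rfl


def pushG {V W : Type*} (e : V ≃ W) (G : SimpleGraph V) : SimpleGraph W where
  Adj x y := G.Adj (e.symm x) (e.symm y)
  symm := ⟨fun x y (h : G.Adj (e.symm x) (e.symm y)) => h.symm⟩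
  loopless := ⟨fun x h => G.loopless.irrefl _ h⟩

@[simp] lemma pushG_adj {V W : Type*} (e : V ≃ W) (G : SimpleGraph V) (x y : W) :
    (pushG e G).Adj x y ↔ G.Adj (e.symm x) (e.symm y) := Iff.rfl

lemma indep_push {V W : Type*} (e : V ≃ W) (G : SimpleGraph V) (s : Finset V) :
    IsIndep (pushG e G) (s.map e.toEmbedding) ↔ IsIndep G s := by
  constructor
  · intro h u hu v hv hadj
    exact h (e u) (by simp [Finset.mem_map_equiv, hu]) (e v)
      (by simp [Finset.mem_map_equiv, hv]) (by simpa using hadj)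
  · intro h u hu v hv hadj
    rw [Finset.mem_map_equiv] at hu hv
    exact h _ hu _ hv hadj

lemma maxIndep_push {V W : Type*} (e : V ≃ W) (G : SimpleGraph V) (s : Finset V) :
    IsMaxIndep (pushG e G) (s.map e.toEmbedding) ↔ IsMaxIndep G s := by
  rw [isMaxIndep_iff, isMaxIndep_iff, indep_push]
  apply and_congr_right'
  constructor
  · intro h v hv
    obtain ⟨u, hu, hadj⟩ := h (e v) (by simpa [Finset.mem_map_equiv] using hv)
    rw [Finset.mem_map_equiv] at hu
    exact ⟨e.symm u, hu, by simpa using hadj⟩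

  · intro h v hv
    rw [Finset.mem_map_equiv] at hv
    obtain ⟨u, hu, hadj⟩ := h _ hv
    exact ⟨e u, by simp [Finset.mem_map_equiv, hu], by simpa using hadj⟩

lemma transfer {V W : Type*} [Fintype V] [Fintype W] (e : V ≃ W) (G : SimpleGraph V) :
    ∃ G' : SimpleGraph W, (IsBipartite G → IsBipartite G') ∧
      (NoIsolated G → NoIsolated G') ∧ iotaM G' = iotaM G := by
  classical
  refine ⟨pushG e G, ?_, ?_, ?_⟩
  · rintro ⟨L, R, hd, hc, he⟩
    refine ⟨L.map e.toEmbedding, R.map e.toEmbedding, ?_, ?_, ?_⟩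
    · rw [Finset.disjoint_map]; exact hd
    · intro v
      rcases hc (e.symm v) with h | h
      · left; rw [Finset.mem_map_equiv]; exact h
      · right; rw [Finset.mem_map_equiv]; exact h
    · intro u v hadj
      rcases he _ _ hadj with ⟨h1, h2⟩ | ⟨h1, h2⟩
      · left; constructor <;> rw [Finset.mem_map_equiv] <;> assumption
      · right; constructor <;> rw [Finset.mem_map_equiv] <;> assumption
  · intro h v
    obtain ⟨u, hu⟩ := h (e.symm v)
    exact ⟨e u, by simpa using hu⟩
  · apply Nat.card_congr
    exact (Equiv.subtypeEquiv e.finsetCongr (fun s => (maxIndep_push e G s).symm)).symm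

lemma iotaM_isEmpty {V : Type*} [Fintype V] [IsEmpty V] (G : SimpleGraph V) : iotaM G = 1 := by
  have hmax : IsMaxIndep G (∅ : Finset V) := by
    constructor
    · intro u hu; simp at hu
    · intro t _ _
      exact (Finset.eq_empty_of_isEmpty t).symm
  haveI : Unique {s : Finset V // IsMaxIndep G s} :=
    ⟨⟨⟨∅, hmax⟩⟩, fun x => Subtype.ext (Finset.eq_empty_of_isEmpty _)⟩
  exact Nat.card_unique


section helpers
variable {V : Type*} {G : SimpleGraph V} {L R : Finset V} {a b : V}

lemma IsBipartition.not_mem_left (h : IsBipartition G L R) (ha : a ∈ R) : a ∉ L :=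
  fun hl => (Finset.disjoint_left.1 h.1 hl) ha

lemma IsBipartition.not_mem_right (h : IsBipartition G L R) (ha : a ∈ L) : a ∉ R :=
  Finset.disjoint_left.1 h.1 ha

lemma IsBipartition.mem_or (h : IsBipartition G L R) (a : V) : a ∈ L ∨ a ∈ R := h.2.1 a

lemma IsBipartition.not_adj_left (h : IsBipartition G L R) (ha : a ∈ L) (hb : b ∈ L) :
    ¬G.Adj a b := by
  intro hadj
  rcases h.2.2 a b hadj with ⟨_, h2⟩ | ⟨h1, _⟩
  · exact h.not_mem_right hb h2
  · exact h.not_mem_right ha h1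

lemma IsBipartition.not_adj_right (h : IsBipartition G L R) (ha : a ∈ R) (hb : b ∈ R) :
    ¬G.Adj a b := by
  intro hadj
  rcases h.2.2 a b hadj with ⟨h1, _⟩ | ⟨_, h2⟩
  · exact h.not_mem_left ha h1
  · exact h.not_mem_left hb h2

lemma IsBipartition.mem_left_of_adj (h : IsBipartition G L R) (hadj : G.Adj a b)
    (ha : a ∈ R) : b ∈ L := by
  rcases h.2.2 a b hadj with ⟨h1, _⟩ | ⟨_, h2⟩
  · exact absurd h1 (h.not_mem_left ha)
  · exact h2

lemma IsBipartition.mem_right_of_adj (h : IsBipartition G L R) (hadj : G.Adj a b)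
    (ha : a ∈ L) : b ∈ R := by
  rcases h.2.2 a b hadj with ⟨_, h2⟩ | ⟨h1, _⟩
  · exact h2
  · exact absurd ha (h.not_mem_left h1)

end helpers

def inγ {γ : Type*} : γ ↪ γ ⊕ Fin 4 := ⟨Sum.inl, Sum.inl_injective⟩

def pGraph {γ : Type*} (K : SimpleGraph γ) (L : Finset γ) : SimpleGraph (γ ⊕ Fin 4) where
  Adj x y := match x, y with
    | .inl a, .inl b => K.Adj a b
    | .inl a, .inr i => (i = 0 ∨ i = 2) ∧ a ∈ L
    | .inr i, .inl a => (i = 0 ∨ i = 2) ∧ a ∈ L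
    | .inr i, .inr j => i ≠ j ∧ (i.val + j.val) % 2 = 1
  symm := by
    constructor
    rintro (a | i) (b | j) h
    · exact h.symm
    · exact h
    · exact h
    · exact ⟨h.1.symm, by omega⟩
  loopless := by
    constructor
    rintro (a | i) h
    · exact K.loopless.irrefl a h
    · exact h.1 rfl

section pG
variable {γ : Type*} (K : SimpleGraph γ) (L : Finset γ)

@[simp] lemma pGraph_adj_ll (a b : γ) : (pGraph K L).Adj (.inl a) (.inl b) ↔ K.Adj a b := Iff.rfl
@[simp] lemma pGraph_adj_lr (a : γ) (i : Fin 4) :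
    (pGraph K L).Adj (.inl a) (.inr i) ↔ (i = 0 ∨ i = 2) ∧ a ∈ L := Iff.rfl
@[simp] lemma pGraph_adj_rl (a : γ) (i : Fin 4) :
    (pGraph K L).Adj (.inr i) (.inl a) ↔ (i = 0 ∨ i = 2) ∧ a ∈ L := Iff.rfl
@[simp] lemma pGraph_adj_rr (i j : Fin 4) :
    (pGraph K L).Adj (.inr i) (.inr j) ↔ i ≠ j ∧ (i.val + j.val) % 2 = 1 := Iff.rfl

end pG

lemma pGraph_maxIndep_iff {γ : Type*} [DecidableEq γ] [Fintype γ] (K : SimpleGraph γ)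
    (L R : Finset γ) (hbip : IsBipartition K L R) (s : Finset (γ ⊕ Fin 4)) :
    IsMaxIndep (pGraph K L) s ↔
      s = R.map inγ ∪ {Sum.inr 0, Sum.inr 2} ∨
        ∃ B, IsMaxIndep K B ∧ s = B.map inγ ∪ {Sum.inr 1, Sum.inr 3} := by
  classical
  rw [isMaxIndep_iff]
  constructor
  · rintro ⟨hind, hdom⟩
    by_cases h0 : Sum.inr 0 ∈ s
    · left
      have hL : ∀ a ∈ L, Sum.inl a ∉ s := by
        intro a ha hmem
        exact hind _ h0 _ hmem (by simp [ha])
      have h2 : Sum.inr 2 ∈ s := by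
        by_contra h2
        obtain ⟨u, hu, hadj⟩ := hdom _ h2
        rcases u with a | j
        · exact hL a hadj.2 hu
        · rw [pGraph_adj_rr] at hadj
          have h1 : Sum.inr (1 : Fin 4) ∉ s := fun hm => hind _ h0 _ hm ((pGraph_adj_rr K L _ _).2 (by decide))
          have h3 : Sum.inr (3 : Fin 4) ∉ s := fun hm => hind _ h0 _ hm ((pGraph_adj_rr K L _ _).2 (by decide))
          fin_cases j
          · exact absurd hadj.2 (by decide)
          · exact h1 hu
          · exact hadj.1 rfl
          · exact h3 hu
      have hR : ∀ a ∈ R, Sum.inl a ∈ s := by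
        intro a ha
        by_contra hmem
        obtain ⟨u, hu, hadj⟩ := hdom _ hmem
        rcases u with b | j
        · exact hL b (hbip.mem_left_of_adj hadj ha) hu
        · exact hbip.not_mem_left ha hadj.2
      ext x
      simp only [Finset.mem_union, Finset.mem_map, Finset.mem_insert, Finset.mem_singleton]
      constructor
      · intro hx
        rcases x with a | j
        · rcases hbip.mem_or a with ha | ha
          · exact absurd hx (hL a ha)
          · exact Or.inl ⟨a, ha, rfl⟩
        · right
          have h1 : Sum.inr (1 : Fin 4) ∉ s := fun hm => hind _ h0 _ hm ((pGraph_adj_rr K L _ _).2 (by decide))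
          have h3 : Sum.inr (3 : Fin 4) ∉ s := fun hm => hind _ h0 _ hm ((pGraph_adj_rr K L _ _).2 (by decide))
          fin_cases j
          · exact Or.inl rfl
          · exact absurd hx h1
          · exact Or.inr rfl
          · exact absurd hx h3
      · rintro (⟨a, ha, rfl⟩ | rfl | rfl)
        · exact hR a ha
        · exact h0
        · exact h2
    · by_cases h2 : Sum.inr 2 ∈ s
      · exfalso
        have hL : ∀ a ∈ L, Sum.inl a ∉ s := by
          intro a ha hmem
          exact hind _ h2 _ hmem (by simp [ha])
        obtain ⟨u, hu, hadj⟩ := hdom _ h0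
        rcases u with a | j
        · exact hL a hadj.2 hu
        · rw [pGraph_adj_rr] at hadj
          have h1 : Sum.inr (1 : Fin 4) ∉ s := fun hm => hind _ h2 _ hm ((pGraph_adj_rr K L _ _).2 (by decide))
          have h3 : Sum.inr (3 : Fin 4) ∉ s := fun hm => hind _ h2 _ hm ((pGraph_adj_rr K L _ _).2 (by decide))
          fin_cases j
          · exact hadj.1 rfl
          · exact h1 hu
          · exact absurd hadj.2 (by decide)
          · exact h3 hu
      · right
        have h1 : Sum.inr (1 : Fin 4) ∈ s := by
          by_contra h1
          obtain ⟨u, hu, hadj⟩ := hdom _ h1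
          rcases u with a | j
          · exact absurd hadj.1 (by decide)
          · rw [pGraph_adj_rr] at hadj
            fin_cases j
            · exact h0 hu
            · exact hadj.1 rfl
            · exact h2 hu
            · exact absurd hadj.2 (by decide)
        have h3 : Sum.inr (3 : Fin 4) ∈ s := by
          by_contra h3
          obtain ⟨u, hu, hadj⟩ := hdom _ h3
          rcases u with a | j
          · exact absurd hadj.1 (by decide)
          · rw [pGraph_adj_rr] at hadj
            fin_cases j
            · exact h0 hu
            · exact absurd hadj.2 (by decide)
            · exact h2 hu
            · exact hadj.1 rfl
        refine ⟨Finset.univ.filter (fun a => Sum.inl a ∈ s),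
          (isMaxIndep_iff K _).2 ⟨?_, ?_⟩, ?_⟩
        · intro a ha b hb hadj
          rw [Finset.mem_filter] at ha hb
          exact hind _ ha.2 _ hb.2 hadj
        · intro a ha
          rw [Finset.mem_filter] at ha
          push_neg at ha
          have hmem := ha (Finset.mem_univ a)
          obtain ⟨u, hu, hadj⟩ := hdom _ hmem
          rcases u with b | j
          · exact ⟨b, Finset.mem_filter.2 ⟨Finset.mem_univ b, hu⟩, hadj⟩
          · exfalso
            rcases hadj.1 with rfl | rfl
            · exact h0 hu
            · exact h2 hu
        · ext x
          simp only [Finset.mem_union, Finset.mem_map, Finset.mem_filter, Finset.mem_univ,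
            true_and, Finset.mem_insert, Finset.mem_singleton]
          constructor
          · intro hx
            rcases x with a | j
            · exact Or.inl ⟨a, hx, rfl⟩
            · right
              fin_cases j
              · exact absurd hx h0
              · exact Or.inl rfl
              · exact absurd hx h2
              · exact Or.inr rfl
          · rintro (⟨a, ha, rfl⟩ | rfl | rfl)
            · exact ha
            · exact h1
            · exact h3
  · rintro (rfl | ⟨B, hB, rfl⟩)
    · constructor
      · intro x hx y hy hadj
        simp only [Finset.mem_union, Finset.mem_map, Finset.mem_insert,
          Finset.mem_singleton] at hx hy
        rcases hx with ⟨a, ha, rfl⟩ | rfl | rfl <;>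
          rcases hy with ⟨b, hb, rfl⟩ | rfl | rfl
        · exact hbip.not_adj_right ha hb hadj
        · exact hbip.not_mem_left ha hadj.2
        · exact hbip.not_mem_left ha hadj.2
        · exact hbip.not_mem_left hb hadj.2
        · exact hadj.1 rfl
        · exact absurd hadj.2 (by decide)
        · exact hbip.not_mem_left hb hadj.2
        · exact absurd hadj.2 (by decide)
        · exact hadj.1 rfl
      · intro v hv
        simp only [Finset.mem_union, Finset.mem_map, Finset.mem_insert,
          Finset.mem_singleton, not_or, not_exists] at hv
        rcases v with a | j
        · have ha : a ∈ L := by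
            rcases hbip.mem_or a with h | h
            · exact h
            · exact absurd rfl (by push_neg at hv; exact (hv.1 a h))
          exact ⟨Sum.inr 0, by simp, by simp [ha]⟩
        · fin_cases j
          · exact absurd rfl (by push_neg at hv; exact hv.2.1)
          · exact ⟨Sum.inr 0, by simp, (pGraph_adj_rr K L _ _).2 (by decide)⟩
          · exact absurd rfl (by push_neg at hv; exact hv.2.2)
          · exact ⟨Sum.inr 0, by simp, (pGraph_adj_rr K L _ _).2 (by decide)⟩
    · have hBind := hB.1
      rw [isMaxIndep_iff] at hB
      constructor
      · intro x hx y hy hadj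
        simp only [Finset.mem_union, Finset.mem_map, Finset.mem_insert,
          Finset.mem_singleton] at hx hy
        rcases hx with ⟨a, ha, rfl⟩ | rfl | rfl <;>
          rcases hy with ⟨b, hb, rfl⟩ | rfl | rfl
        · exact hBind _ ha _ hb hadj
        · exact absurd hadj.1 (by decide)
        · exact absurd hadj.1 (by decide)
        · exact absurd hadj.1 (by decide)
        · exact hadj.1 rfl
        · exact absurd hadj.2 (by decide)
        · exact absurd hadj.1 (by decide)
        · exact absurd hadj.2 (by decide)
        · exact hadj.1 rfl
      · intro v hv
        simp only [Finset.mem_union, Finset.mem_map, Finset.mem_insert,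
          Finset.mem_singleton, not_or, not_exists] at hv
        rcases v with a | j
        · have ha : a ∉ B := by
            intro h
            exact absurd rfl (by push_neg at hv; exact hv.1 a h)
          obtain ⟨b, hb, hadj⟩ := hB.2 a ha
          exact ⟨Sum.inl b, Finset.mem_union_left _ (Finset.mem_map.2 ⟨b, hb, rfl⟩), hadj⟩
        · fin_cases j
          · exact ⟨Sum.inr 1, by simp, (pGraph_adj_rr K L _ _).2 (by decide)⟩
          · exact absurd rfl (by push_neg at hv; exact hv.2.1)
          · exact ⟨Sum.inr 1, by simp, (pGraph_adj_rr K L _ _).2 (by decide)⟩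
          · exact absurd rfl (by push_neg at hv; exact hv.2.2)


lemma plusOne {γ : Type*} [Fintype γ] (K : SimpleGraph γ) (L R : Finset γ)
    (hbip : IsBipartition K L R) (hiso : NoIsolated K) :
    ∃ G' : SimpleGraph (γ ⊕ Fin 4), IsBipartite G' ∧ NoIsolated G' ∧
      iotaM G' = iotaM K + 1 := by
  classical
  refine ⟨pGraph K L, ?_, ?_, ?_⟩
  · refine ⟨L.map inγ ∪ {Sum.inr 1, Sum.inr 3}, R.map inγ ∪ {Sum.inr 0, Sum.inr 2}, ?_, ?_, ?_⟩
    · rw [Finset.disjoint_left]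
      intro x hx hx'
      simp only [Finset.mem_union, Finset.mem_map, Finset.mem_insert, Finset.mem_singleton,
        inγ, Function.Embedding.coeFn_mk] at hx hx'
      rcases hx with ⟨a, ha, rfl⟩ | rfl | rfl <;>
        rcases hx' with ⟨b, hb, h⟩ | h | h <;> first
          | (exact hbip.not_mem_right ha (by rw [Sum.inl.injEq] at h; exact h ▸ hb))
          | simp_all
    · intro v
      rcases v with a | j
      · rcases hbip.mem_or a with h | h
        · left; exact Finset.mem_union_left _ (Finset.mem_map.2 ⟨a, h, rfl⟩)
        · right; exact Finset.mem_union_left _ (Finset.mem_map.2 ⟨a, h, rfl⟩)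
      · fin_cases j
        · right; simp
        · left; simp
        · right; simp
        · left; simp
    · intro x y hadj
      rcases x with a | i <;> rcases y with b | j
      · rcases hbip.2.2 a b hadj with ⟨h1, h2⟩ | ⟨h1, h2⟩
        · exact Or.inl ⟨Finset.mem_union_left _ (Finset.mem_map.2 ⟨a, h1, rfl⟩),
            Finset.mem_union_left _ (Finset.mem_map.2 ⟨b, h2, rfl⟩)⟩
        · exact Or.inr ⟨Finset.mem_union_left _ (Finset.mem_map.2 ⟨a, h1, rfl⟩),
            Finset.mem_union_left _ (Finset.mem_map.2 ⟨b, h2, rfl⟩)⟩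
      · rcases hadj.1 with rfl | rfl
        · exact Or.inl ⟨Finset.mem_union_left _ (Finset.mem_map.2 ⟨a, hadj.2, rfl⟩), by simp⟩
        · exact Or.inl ⟨Finset.mem_union_left _ (Finset.mem_map.2 ⟨a, hadj.2, rfl⟩), by simp⟩
      · rcases hadj.1 with rfl | rfl
        · exact Or.inr ⟨by simp, Finset.mem_union_left _ (Finset.mem_map.2 ⟨b, hadj.2, rfl⟩)⟩
        · exact Or.inr ⟨by simp, Finset.mem_union_left _ (Finset.mem_map.2 ⟨b, hadj.2, rfl⟩)⟩
      · have h1 := hadj.1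
        have h2 := hadj.2
        fin_cases i <;> fin_cases j <;> simp_all <;> omega
  · intro v
    rcases v with a | j
    · obtain ⟨b, hb⟩ := hiso a
      exact ⟨Sum.inl b, hb⟩
    · fin_cases j
      · exact ⟨Sum.inr 1, (pGraph_adj_rr K L _ _).2 (by decide)⟩
      · exact ⟨Sum.inr 0, (pGraph_adj_rr K L _ _).2 (by decide)⟩
      · exact ⟨Sum.inr 1, (pGraph_adj_rr K L _ _).2 (by decide)⟩
      · exact ⟨Sum.inr 0, (pGraph_adj_rr K L _ _).2 (by decide)⟩
  · have hset : {s : Finset (γ ⊕ Fin 4) | IsMaxIndep (pGraph K L) s}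
        = insert (R.map inγ ∪ {Sum.inr 0, Sum.inr 2})
            ((fun B => B.map inγ ∪ {Sum.inr 1, Sum.inr 3}) '' {B | IsMaxIndep K B}) := by
      ext s
      simp only [Set.mem_setOf_eq, Set.mem_insert_iff, Set.mem_image,
        pGraph_maxIndep_iff K L R hbip]
      constructor
      · rintro (h | ⟨B, hB, h⟩)
        · exact Or.inl h
        · exact Or.inr ⟨B, hB, h.symm⟩
      · rintro (h | ⟨B, hB, h⟩)
        · exact Or.inl h
        · exact Or.inr ⟨B, hB, h.symm⟩
    have hinj : Function.Injective
        (fun B : Finset γ => B.map inγ ∪ ({Sum.inr 1, Sum.inr 3} : Finset (γ ⊕ Fin 4))) := by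
      intro B1 B2 h
      ext a
      simpa [inγ] using Finset.ext_iff.1 h (Sum.inl a)
    have hnm : (R.map inγ ∪ ({Sum.inr 0, Sum.inr 2} : Finset (γ ⊕ Fin 4)))
        ∉ ((fun B => B.map inγ ∪ {Sum.inr 1, Sum.inr 3}) '' {B | IsMaxIndep K B}) := by
      rintro ⟨B, _, hBe⟩
      have h0 : (Sum.inr 0 : γ ⊕ Fin 4) ∈ R.map inγ ∪ {Sum.inr 0, Sum.inr 2} := by simp
      rw [← hBe] at h0
      simp [inγ] at h0
    rw [iotaM_eq_ncard, hset, Set.ncard_insert_of_notMem hnm (Set.toFinite _),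
      Set.ncard_image_of_injective _ hinj, iotaM_eq_ncard]

def inα {α β : Type*} : α ↪ (α ⊕ β) ⊕ Fin 4 :=
  ⟨fun a => Sum.inl (Sum.inl a), Sum.inl_injective.comp Sum.inl_injective⟩
def inβ {α β : Type*} : β ↪ (α ⊕ β) ⊕ Fin 4 :=
  ⟨fun b => Sum.inl (Sum.inr b), Sum.inl_injective.comp Sum.inr_injective⟩

def mGraph {α β : Type*} (G : SimpleGraph α) (Gt : SimpleGraph β)
    (L1 R1 : Finset α) (L2 R2 : Finset β) : SimpleGraph ((α ⊕ β) ⊕ Fin 4) where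
  Adj x y := match x, y with
    | .inl (.inl a), .inl (.inl b) => G.Adj a b
    | .inl (.inr a), .inl (.inr b) => Gt.Adj a b
    | .inl (.inl a), .inl (.inr b) => (a ∈ L1 ∧ b ∈ L2) ∨ (a ∈ R1 ∧ b ∈ R2)
    | .inl (.inr b), .inl (.inl a) => (a ∈ L1 ∧ b ∈ L2) ∨ (a ∈ R1 ∧ b ∈ R2)
    | .inr i, .inr j => i.val + 1 = j.val ∨ j.val + 1 = i.val
    | .inr i, .inl (.inl a) => (i = 1 ∧ a ∈ L1) ∨ (i = 2 ∧ a ∈ R1)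
    | .inl (.inl a), .inr i => (i = 1 ∧ a ∈ L1) ∨ (i = 2 ∧ a ∈ R1)
    | .inr i, .inl (.inr b) => (i = 1 ∧ b ∈ R2) ∨ (i = 2 ∧ b ∈ L2)
    | .inl (.inr b), .inr i => (i = 1 ∧ b ∈ R2) ∨ (i = 2 ∧ b ∈ L2)
  symm := by
    constructor
    rintro ((a | a) | i) ((b | b) | j) h
    · exact h.symm
    · exact h
    · exact h
    · exact h
    · exact h.symm
    · exact h
    · exact h
    · exact h
    · exact h.symm
  loopless := by
    constructor
    rintro ((a | a) | i) h
    · exact G.loopless.irrefl a h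
    · exact Gt.loopless.irrefl a h
    · omega

section mG
variable {α β : Type*} (G : SimpleGraph α) (Gt : SimpleGraph β)
  (L1 R1 : Finset α) (L2 R2 : Finset β)

@[simp] lemma mG_aa (a b : α) :
    (mGraph G Gt L1 R1 L2 R2).Adj (.inl (.inl a)) (.inl (.inl b)) ↔ G.Adj a b := Iff.rfl
@[simp] lemma mG_bb (a b : β) :
    (mGraph G Gt L1 R1 L2 R2).Adj (.inl (.inr a)) (.inl (.inr b)) ↔ Gt.Adj a b := Iff.rfl
@[simp] lemma mG_ab (a : α) (b : β) :
    (mGraph G Gt L1 R1 L2 R2).Adj (.inl (.inl a)) (.inl (.inr b)) ↔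
      (a ∈ L1 ∧ b ∈ L2) ∨ (a ∈ R1 ∧ b ∈ R2) := Iff.rfl
@[simp] lemma mG_ba (a : α) (b : β) :
    (mGraph G Gt L1 R1 L2 R2).Adj (.inl (.inr b)) (.inl (.inl a)) ↔
      (a ∈ L1 ∧ b ∈ L2) ∨ (a ∈ R1 ∧ b ∈ R2) := Iff.rfl
@[simp] lemma mG_uu (i j : Fin 4) :
    (mGraph G Gt L1 R1 L2 R2).Adj (.inr i) (.inr j) ↔
      i.val + 1 = j.val ∨ j.val + 1 = i.val := Iff.rfl
@[simp] lemma mG_ua (i : Fin 4) (a : α) :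
    (mGraph G Gt L1 R1 L2 R2).Adj (.inr i) (.inl (.inl a)) ↔
      (i = 1 ∧ a ∈ L1) ∨ (i = 2 ∧ a ∈ R1) := Iff.rfl
@[simp] lemma mG_au (i : Fin 4) (a : α) :
    (mGraph G Gt L1 R1 L2 R2).Adj (.inl (.inl a)) (.inr i) ↔
      (i = 1 ∧ a ∈ L1) ∨ (i = 2 ∧ a ∈ R1) := Iff.rfl
@[simp] lemma mG_ub (i : Fin 4) (b : β) :
    (mGraph G Gt L1 R1 L2 R2).Adj (.inr i) (.inl (.inr b)) ↔
      (i = 1 ∧ b ∈ R2) ∨ (i = 2 ∧ b ∈ L2) := Iff.rfl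
@[simp] lemma mG_bu (i : Fin 4) (b : β) :
    (mGraph G Gt L1 R1 L2 R2).Adj (.inl (.inr b)) (.inr i) ↔
      (i = 1 ∧ b ∈ R2) ∨ (i = 2 ∧ b ∈ L2) := Iff.rfl

end mG

lemma mGraph_maxIndep_iff {α β : Type*} [DecidableEq α] [DecidableEq β] [Fintype α] [Fintype β]
    (G : SimpleGraph α) (Gt : SimpleGraph β) (L1 R1 : Finset α) (L2 R2 : Finset β)
    (hbG : IsBipartition G L1 R1) (hbGt : IsBipartition Gt L2 R2)
    (hisoG : NoIsolated G) (hisoGt : NoIsolated Gt)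
    (hL1 : L1.Nonempty) (hR1 : R1.Nonempty) (hL2 : L2.Nonempty) (hR2 : R2.Nonempty)
    (s : Finset ((α ⊕ β) ⊕ Fin 4)) :
    IsMaxIndep (mGraph G Gt L1 R1 L2 R2) s ↔
      s = L1.map inα ∪ R2.map inβ ∪ {Sum.inr 0, Sum.inr 2} ∨
      s = R1.map inα ∪ L2.map inβ ∪ {Sum.inr 1, Sum.inr 3} ∨
      s = L1.map inα ∪ R2.map inβ ∪ {Sum.inr 0, Sum.inr 3} ∨
      s = R1.map inα ∪ L2.map inβ ∪ {Sum.inr 0, Sum.inr 3} ∨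
      (∃ A, IsMaxIndep G A ∧ (A ∩ L1).Nonempty ∧ (A ∩ R1).Nonempty ∧
        s = A.map inα ∪ {Sum.inr 0, Sum.inr 3}) ∨
      (∃ B, IsMaxIndep Gt B ∧ (B ∩ L2).Nonempty ∧ (B ∩ R2).Nonempty ∧
        s = B.map inβ ∪ {Sum.inr 0, Sum.inr 3}) := by
  classical
  rw [isMaxIndep_iff]
  constructor
  · rintro ⟨hind, hdom⟩
    by_cases hu1 : (Sum.inr 1 : (α ⊕ β) ⊕ Fin 4) ∈ s
    · by_cases hu2 : (Sum.inr 2 : (α ⊕ β) ⊕ Fin 4) ∈ s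
      · exact absurd ((mG_uu G Gt L1 R1 L2 R2 _ _).2 (by decide)) (hind _ hu1 _ hu2)
      · -- s = SB
        have hu0 : (Sum.inr 0 : (α ⊕ β) ⊕ Fin 4) ∉ s := fun h =>
          hind _ h _ hu1 ((mG_uu G Gt L1 R1 L2 R2 _ _).2 (by decide))
        have hu3 : (Sum.inr 3 : (α ⊕ β) ⊕ Fin 4) ∈ s := by
          by_contra h3
          obtain ⟨u, hu, hadj⟩ := hdom _ h3
          rcases u with (a | b) | j
          · rcases hadj with ⟨h, _⟩ | ⟨h, _⟩ <;> exact absurd h (by decide)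
          · rcases hadj with ⟨h, _⟩ | ⟨h, _⟩ <;> exact absurd h (by decide)
          · fin_cases j
            · exact absurd ((mG_uu G Gt L1 R1 L2 R2 _ _).1 hadj) (by decide)
            · exact absurd ((mG_uu G Gt L1 R1 L2 R2 _ _).1 hadj) (by decide)
            · exact hu2 hu
            · exact absurd ((mG_uu G Gt L1 R1 L2 R2 _ _).1 hadj) (by decide)
        have hsL1 : ∀ a ∈ L1, Sum.inl (Sum.inl a) ∉ s := fun a ha h =>
          hind _ hu1 _ h (Or.inl ⟨rfl, ha⟩)
        have hsR2 : ∀ b ∈ R2, Sum.inl (Sum.inr b) ∉ s := fun b hb h =>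
          hind _ hu1 _ h (Or.inl ⟨rfl, hb⟩)
        have hsR1 : ∀ a ∈ R1, Sum.inl (Sum.inl a) ∈ s := by
          intro a ha
          by_contra hmem
          obtain ⟨u, hu, hadj⟩ := hdom _ hmem
          rcases u with (c | d) | j
          · exact hsL1 c (hbG.mem_left_of_adj hadj ha) hu
          · rcases hadj with ⟨h1, h2⟩ | ⟨h1, h2⟩
            · exact hbG.not_mem_left ha h1
            · exact hsR2 d h2 hu
          · rcases hadj with ⟨rfl, h2⟩ | ⟨rfl, h2⟩
            · exact hbG.not_mem_left ha h2
            · exact hu2 hu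
        have hsL2 : ∀ b ∈ L2, Sum.inl (Sum.inr b) ∈ s := by
          intro b hb
          by_contra hmem
          obtain ⟨u, hu, hadj⟩ := hdom _ hmem
          rcases u with (c | d) | j
          · rcases hadj with ⟨h1, h2⟩ | ⟨h1, h2⟩
            · exact hsL1 c h1 hu
            · exact hbGt.not_mem_right hb h2
          · exact hsR2 d (hbGt.mem_right_of_adj hadj hb) hu
          · rcases hadj with ⟨rfl, h2⟩ | ⟨rfl, h2⟩
            · exact hbGt.not_mem_right hb h2
            · exact hu2 hu
        refine Or.inr (Or.inl ?_)
        ext x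
        simp only [Finset.mem_union, Finset.mem_map, Finset.mem_insert, Finset.mem_singleton,
          inα, inβ, Function.Embedding.coeFn_mk]
        constructor
        · intro hx
          rcases x with (a | b) | j
          · rcases hbG.mem_or a with h | h
            · exact absurd hx (hsL1 a h)
            · exact Or.inl (Or.inl ⟨a, h, rfl⟩)
          · rcases hbGt.mem_or b with h | h
            · exact Or.inl (Or.inr ⟨b, h, rfl⟩)
            · exact absurd hx (hsR2 b h)
          · fin_cases j
            · exact absurd hx hu0
            · exact Or.inr (Or.inl rfl)
            · exact absurd hx hu2
            · exact Or.inr (Or.inr rfl)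
        · rintro ((⟨a, ha, rfl⟩ | ⟨b, hb, rfl⟩) | rfl | rfl)
          · exact hsR1 a ha
          · exact hsL2 b hb
          · exact hu1
          · exact hu3
    · by_cases hu2 : (Sum.inr 2 : (α ⊕ β) ⊕ Fin 4) ∈ s
      · -- s = SA
        have hu3 : (Sum.inr 3 : (α ⊕ β) ⊕ Fin 4) ∉ s := fun h =>
          hind _ hu2 _ h ((mG_uu G Gt L1 R1 L2 R2 _ _).2 (by decide))
        have hu0 : (Sum.inr 0 : (α ⊕ β) ⊕ Fin 4) ∈ s := by
          by_contra h0
          obtain ⟨u, hu, hadj⟩ := hdom _ h0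
          rcases u with (a | b) | j
          · rcases hadj with ⟨h, _⟩ | ⟨h, _⟩ <;> exact absurd h (by decide)
          · rcases hadj with ⟨h, _⟩ | ⟨h, _⟩ <;> exact absurd h (by decide)
          · fin_cases j
            · exact absurd ((mG_uu G Gt L1 R1 L2 R2 _ _).1 hadj) (by decide)
            · exact hu1 hu
            · exact absurd ((mG_uu G Gt L1 R1 L2 R2 _ _).1 hadj) (by decide)
            · exact absurd ((mG_uu G Gt L1 R1 L2 R2 _ _).1 hadj) (by decide)
        have hsR1 : ∀ a ∈ R1, Sum.inl (Sum.inl a) ∉ s := fun a ha h =>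
          hind _ hu2 _ h (Or.inr ⟨rfl, ha⟩)
        have hsL2 : ∀ b ∈ L2, Sum.inl (Sum.inr b) ∉ s := fun b hb h =>
          hind _ hu2 _ h (Or.inr ⟨rfl, hb⟩)
        have hsL1 : ∀ a ∈ L1, Sum.inl (Sum.inl a) ∈ s := by
          intro a ha
          by_contra hmem
          obtain ⟨u, hu, hadj⟩ := hdom _ hmem
          rcases u with (c | d) | j
          · exact hsR1 c (hbG.mem_right_of_adj hadj ha) hu
          · rcases hadj with ⟨h1, h2⟩ | ⟨h1, h2⟩
            · exact hsL2 d h2 hu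
            · exact hbG.not_mem_right ha h1
          · rcases hadj with ⟨rfl, h2⟩ | ⟨rfl, h2⟩
            · exact hu1 hu
            · exact hbG.not_mem_right ha h2
        have hsR2 : ∀ b ∈ R2, Sum.inl (Sum.inr b) ∈ s := by
          intro b hb
          by_contra hmem
          obtain ⟨u, hu, hadj⟩ := hdom _ hmem
          rcases u with (c | d) | j
          · rcases hadj with ⟨h1, h2⟩ | ⟨h1, h2⟩
            · exact hbGt.not_mem_left hb h2
            · exact hsR1 c h1 hu
          · exact hsL2 d (hbGt.mem_left_of_adj hadj hb) hu
          · rcases hadj with ⟨rfl, h2⟩ | ⟨rfl, h2⟩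
            · exact hu1 hu
            · exact hbGt.not_mem_left hb h2
        refine Or.inl ?_
        ext x
        simp only [Finset.mem_union, Finset.mem_map, Finset.mem_insert, Finset.mem_singleton,
          inα, inβ, Function.Embedding.coeFn_mk]
        constructor
        · intro hx
          rcases x with (a | b) | j
          · rcases hbG.mem_or a with h | h
            · exact Or.inl (Or.inl ⟨a, h, rfl⟩)
            · exact absurd hx (hsR1 a h)
          · rcases hbGt.mem_or b with h | h
            · exact absurd hx (hsL2 b h)
            · exact Or.inl (Or.inr ⟨b, h, rfl⟩)
          · fin_cases j
            · exact Or.inr (Or.inl rfl)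
            · exact absurd hx hu1
            · exact Or.inr (Or.inr rfl)
            · exact absurd hx hu3
        · rintro ((⟨a, ha, rfl⟩ | ⟨b, hb, rfl⟩) | rfl | rfl)
          · exact hsL1 a ha
          · exact hsR2 b hb
          · exact hu0
          · exact hu2
      · -- u1 ∉ s, u2 ∉ s
        have hu0 : (Sum.inr 0 : (α ⊕ β) ⊕ Fin 4) ∈ s := by
          by_contra h0
          obtain ⟨u, hu, hadj⟩ := hdom _ h0
          rcases u with (a | b) | j
          · rcases hadj with ⟨h, _⟩ | ⟨h, _⟩ <;> exact absurd h (by decide)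
          · rcases hadj with ⟨h, _⟩ | ⟨h, _⟩ <;> exact absurd h (by decide)
          · fin_cases j
            · exact absurd ((mG_uu G Gt L1 R1 L2 R2 _ _).1 hadj) (by decide)
            · exact hu1 hu
            · exact absurd ((mG_uu G Gt L1 R1 L2 R2 _ _).1 hadj) (by decide)
            · exact absurd ((mG_uu G Gt L1 R1 L2 R2 _ _).1 hadj) (by decide)
        have hu3 : (Sum.inr 3 : (α ⊕ β) ⊕ Fin 4) ∈ s := by
          by_contra h3
          obtain ⟨u, hu, hadj⟩ := hdom _ h3
          rcases u with (a | b) | j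
          · rcases hadj with ⟨h, _⟩ | ⟨h, _⟩ <;> exact absurd h (by decide)
          · rcases hadj with ⟨h, _⟩ | ⟨h, _⟩ <;> exact absurd h (by decide)
          · fin_cases j
            · exact absurd ((mG_uu G Gt L1 R1 L2 R2 _ _).1 hadj) (by decide)
            · exact absurd ((mG_uu G Gt L1 R1 L2 R2 _ _).1 hadj) (by decide)
            · exact hu2 hu
            · exact absurd ((mG_uu G Gt L1 R1 L2 R2 _ _).1 hadj) (by decide)
        by_cases hBe : ∀ b, Sum.inl (Sum.inr b) ∉ s
        · -- shape (e)
          refine Or.inr (Or.inr (Or.inr (Or.inr (Or.inl ?_))))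
          refine ⟨Finset.univ.filter (fun a => Sum.inl (Sum.inl a) ∈ s),
            (isMaxIndep_iff G _).2 ⟨?_, ?_⟩, ?_, ?_, ?_⟩
          · intro a ha c hc hadj
            rw [Finset.mem_filter] at ha hc
            exact hind _ ha.2 _ hc.2 hadj
          · intro a ha
            rw [Finset.mem_filter] at ha
            push_neg at ha
            obtain ⟨u, hu, hadj⟩ := hdom _ (ha (Finset.mem_univ a))
            rcases u with (c | d) | j
            · exact ⟨c, Finset.mem_filter.2 ⟨Finset.mem_univ c, hu⟩, hadj⟩
            · exact absurd hu (hBe d)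
            · exfalso
              rcases hadj with ⟨rfl, h2⟩ | ⟨rfl, h2⟩
              · exact hu1 hu
              · exact hu2 hu
          · obtain ⟨b0, hb0⟩ := hL2
            obtain ⟨u, hu, hadj⟩ := hdom _ (hBe b0)
            rcases u with (c | d) | j
            · rcases hadj with ⟨h1, h2⟩ | ⟨h1, h2⟩
              · exact ⟨c, Finset.mem_inter.2 ⟨Finset.mem_filter.2 ⟨Finset.mem_univ c, hu⟩, h1⟩⟩
              · exact absurd h2 (hbGt.not_mem_right hb0)
            · exact absurd hu (hBe d)
            · exfalso
              rcases hadj with ⟨rfl, h2⟩ | ⟨rfl, h2⟩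
              · exact hbGt.not_mem_right hb0 h2
              · exact hu2 hu
          · obtain ⟨b1, hb1⟩ := hR2
            obtain ⟨u, hu, hadj⟩ := hdom _ (hBe b1)
            rcases u with (c | d) | j
            · rcases hadj with ⟨h1, h2⟩ | ⟨h1, h2⟩
              · exact absurd h2 (hbGt.not_mem_left hb1)
              · exact ⟨c, Finset.mem_inter.2 ⟨Finset.mem_filter.2 ⟨Finset.mem_univ c, hu⟩, h1⟩⟩
            · exact absurd hu (hBe d)
            · exfalso
              rcases hadj with ⟨rfl, h2⟩ | ⟨rfl, h2⟩
              · exact hu1 hu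
              · exact hbGt.not_mem_left hb1 h2
          · ext x
            simp only [Finset.mem_union, Finset.mem_map, Finset.mem_insert, Finset.mem_singleton,
              Finset.mem_filter, Finset.mem_univ, true_and, inα, Function.Embedding.coeFn_mk]
            constructor
            · intro hx
              rcases x with (a | b) | j
              · exact Or.inl ⟨a, hx, rfl⟩
              · exact absurd hx (hBe b)
              · fin_cases j
                · exact Or.inr (Or.inl rfl)
                · exact absurd hx hu1
                · exact absurd hx hu2
                · exact Or.inr (Or.inr rfl)
            · rintro (⟨a, ha, rfl⟩ | rfl | rfl)
              · exact ha
              · exact hu0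
              · exact hu3
        · push_neg at hBe
          obtain ⟨b0, hb0s⟩ := hBe
          by_cases hAe : ∀ a, Sum.inl (Sum.inl a) ∉ s
          · -- shape (f)
            refine Or.inr (Or.inr (Or.inr (Or.inr (Or.inr ?_))))
            refine ⟨Finset.univ.filter (fun b => Sum.inl (Sum.inr b) ∈ s),
              (isMaxIndep_iff Gt _).2 ⟨?_, ?_⟩, ?_, ?_, ?_⟩
            · intro b hb d hd hadj
              rw [Finset.mem_filter] at hb hd
              exact hind _ hb.2 _ hd.2 hadj
            · intro b hb
              rw [Finset.mem_filter] at hb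
              push_neg at hb
              obtain ⟨u, hu, hadj⟩ := hdom _ (hb (Finset.mem_univ b))
              rcases u with (c | d) | j
              · exact absurd hu (hAe c)
              · exact ⟨d, Finset.mem_filter.2 ⟨Finset.mem_univ d, hu⟩, hadj⟩
              · exfalso
                rcases hadj with ⟨rfl, h2⟩ | ⟨rfl, h2⟩
                · exact hu1 hu
                · exact hu2 hu
            · obtain ⟨a0, ha0⟩ := hL1
              obtain ⟨u, hu, hadj⟩ := hdom _ (hAe a0)
              rcases u with (c | d) | j
              · exact absurd hu (hAe c)
              · rcases hadj with ⟨h1, h2⟩ | ⟨h1, h2⟩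
                · exact ⟨d, Finset.mem_inter.2 ⟨Finset.mem_filter.2 ⟨Finset.mem_univ d, hu⟩, h2⟩⟩
                · exact absurd h1 (hbG.not_mem_right ha0)
              · exfalso
                rcases hadj with ⟨rfl, h2⟩ | ⟨rfl, h2⟩
                · exact hu1 hu
                · exact hbG.not_mem_right ha0 h2
            · obtain ⟨a1, ha1⟩ := hR1
              obtain ⟨u, hu, hadj⟩ := hdom _ (hAe a1)
              rcases u with (c | d) | j
              · exact absurd hu (hAe c)
              · rcases hadj with ⟨h1, h2⟩ | ⟨h1, h2⟩
                · exact absurd h1 (hbG.not_mem_left ha1)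
                · exact ⟨d, Finset.mem_inter.2 ⟨Finset.mem_filter.2 ⟨Finset.mem_univ d, hu⟩, h2⟩⟩
              · exfalso
                rcases hadj with ⟨rfl, h2⟩ | ⟨rfl, h2⟩
                · exact hbG.not_mem_left ha1 h2
                · exact hu2 hu
            · ext x
              simp only [Finset.mem_union, Finset.mem_map, Finset.mem_insert, Finset.mem_singleton,
                Finset.mem_filter, Finset.mem_univ, true_and, inβ, Function.Embedding.coeFn_mk]
              constructor
              · intro hx
                rcases x with (a | b) | j
                · exact absurd hx (hAe a)
                · exact Or.inl ⟨b, hx, rfl⟩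
                · fin_cases j
                  · exact Or.inr (Or.inl rfl)
                  · exact absurd hx hu1
                  · exact absurd hx hu2
                  · exact Or.inr (Or.inr rfl)
              · rintro (⟨b, hb, rfl⟩ | rfl | rfl)
                · exact hb
                · exact hu0
                · exact hu3
          · push_neg at hAe
            obtain ⟨a0, ha0s⟩ := hAe
            by_cases hAL : ∃ a ∈ L1, Sum.inl (Sum.inl a) ∈ s
            · -- s = SC
              obtain ⟨aL, haL, haLs⟩ := hAL
              have hnL2 : ∀ b ∈ L2, Sum.inl (Sum.inr b) ∉ s := fun b hb h =>
                hind _ haLs _ h (Or.inl ⟨haL, hb⟩)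
              have hb0R2 : b0 ∈ R2 := (hbGt.mem_or b0).resolve_left (fun h => hnL2 b0 h hb0s)
              have hnR1 : ∀ a ∈ R1, Sum.inl (Sum.inl a) ∉ s := fun a ha h =>
                hind _ h _ hb0s (Or.inr ⟨ha, hb0R2⟩)
              have hsL1 : ∀ a ∈ L1, Sum.inl (Sum.inl a) ∈ s := by
                intro a ha
                by_contra hmem
                obtain ⟨u, hu, hadj⟩ := hdom _ hmem
                rcases u with (c | d) | j
                · exact hnR1 c (hbG.mem_right_of_adj hadj ha) hu
                · rcases hadj with ⟨h1, h2⟩ | ⟨h1, h2⟩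
                  · exact hnL2 d h2 hu
                  · exact hbG.not_mem_right ha h1
                · rcases hadj with ⟨rfl, h2⟩ | ⟨rfl, h2⟩
                  · exact hu1 hu
                  · exact hbG.not_mem_right ha h2
              have hsR2 : ∀ b ∈ R2, Sum.inl (Sum.inr b) ∈ s := by
                intro b hb
                by_contra hmem
                obtain ⟨u, hu, hadj⟩ := hdom _ hmem
                rcases u with (c | d) | j
                · rcases hadj with ⟨h1, h2⟩ | ⟨h1, h2⟩
                  · exact hbGt.not_mem_left hb h2
                  · exact hnR1 c h1 hu
                · exact hnL2 d (hbGt.mem_left_of_adj hadj hb) hu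
                · rcases hadj with ⟨rfl, h2⟩ | ⟨rfl, h2⟩
                  · exact hu1 hu
                  · exact hbGt.not_mem_left hb h2
              refine Or.inr (Or.inr (Or.inl ?_))
              ext x
              simp only [Finset.mem_union, Finset.mem_map, Finset.mem_insert, Finset.mem_singleton,
                inα, inβ, Function.Embedding.coeFn_mk]
              constructor
              · intro hx
                rcases x with (a | b) | j
                · rcases hbG.mem_or a with h | h
                  · exact Or.inl (Or.inl ⟨a, h, rfl⟩)
                  · exact absurd hx (hnR1 a h)
                · rcases hbGt.mem_or b with h | h
                  · exact absurd hx (hnL2 b h)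
                  · exact Or.inl (Or.inr ⟨b, h, rfl⟩)
                · fin_cases j
                  · exact Or.inr (Or.inl rfl)
                  · exact absurd hx hu1
                  · exact absurd hx hu2
                  · exact Or.inr (Or.inr rfl)
              · rintro ((⟨a, ha, rfl⟩ | ⟨b, hb, rfl⟩) | rfl | rfl)
                · exact hsL1 a ha
                · exact hsR2 b hb
                · exact hu0
                · exact hu3
            · -- s = SD
              push_neg at hAL
              have ha0R : a0 ∈ R1 := (hbG.mem_or a0).resolve_left (fun h => hAL a0 h ha0s)
              have hnR2 : ∀ b ∈ R2, Sum.inl (Sum.inr b) ∉ s := fun b hb h =>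
                hind _ ha0s _ h (Or.inr ⟨ha0R, hb⟩)
              have hb0L2 : b0 ∈ L2 := (hbGt.mem_or b0).resolve_right (fun h => hnR2 b0 h hb0s)
              have hsR1 : ∀ a ∈ R1, Sum.inl (Sum.inl a) ∈ s := by
                intro a ha
                by_contra hmem
                obtain ⟨u, hu, hadj⟩ := hdom _ hmem
                rcases u with (c | d) | j
                · exact hAL c (hbG.mem_left_of_adj hadj ha) hu
                · rcases hadj with ⟨h1, h2⟩ | ⟨h1, h2⟩
                  · exact hbG.not_mem_left ha h1
                  · exact hnR2 d h2 hu
                · rcases hadj with ⟨rfl, h2⟩ | ⟨rfl, h2⟩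
                  · exact hbG.not_mem_left ha h2
                  · exact hu2 hu
              have hsL2 : ∀ b ∈ L2, Sum.inl (Sum.inr b) ∈ s := by
                intro b hb
                by_contra hmem
                obtain ⟨u, hu, hadj⟩ := hdom _ hmem
                rcases u with (c | d) | j
                · rcases hadj with ⟨h1, h2⟩ | ⟨h1, h2⟩
                  · exact hAL c h1 hu
                  · exact hbGt.not_mem_right hb h2
                · exact hnR2 d (hbGt.mem_right_of_adj hadj hb) hu
                · rcases hadj with ⟨rfl, h2⟩ | ⟨rfl, h2⟩
                  · exact hbGt.not_mem_right hb h2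
                  · exact hu2 hu
              refine Or.inr (Or.inr (Or.inr (Or.inl ?_)))
              ext x
              simp only [Finset.mem_union, Finset.mem_map, Finset.mem_insert, Finset.mem_singleton,
                inα, inβ, Function.Embedding.coeFn_mk]
              constructor
              · intro hx
                rcases x with (a | b) | j
                · rcases hbG.mem_or a with h | h
                  · exact absurd hx (hAL a h)
                  · exact Or.inl (Or.inl ⟨a, h, rfl⟩)
                · rcases hbGt.mem_or b with h | h
                  · exact Or.inl (Or.inr ⟨b, h, rfl⟩)
                  · exact absurd hx (hnR2 b h)
                · fin_cases j
                  · exact Or.inr (Or.inl rfl)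
                  · exact absurd hx hu1
                  · exact absurd hx hu2
                  · exact Or.inr (Or.inr rfl)
              · rintro ((⟨a, ha, rfl⟩ | ⟨b, hb, rfl⟩) | rfl | rfl)
                · exact hsR1 a ha
                · exact hsL2 b hb
                · exact hu0
                · exact hu3
  · have hindep : ∀ (P : Finset α) (Q : Finset β) (T : Finset (Fin 4)),
        (∀ a ∈ P, ∀ c ∈ P, ¬G.Adj a c) → (∀ b ∈ Q, ∀ d ∈ Q, ¬Gt.Adj b d) →
        (∀ a ∈ P, ∀ b ∈ Q, ¬((a ∈ L1 ∧ b ∈ L2) ∨ (a ∈ R1 ∧ b ∈ R2))) →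
        (∀ a ∈ P, ∀ i ∈ T, ¬((i = 1 ∧ a ∈ L1) ∨ (i = 2 ∧ a ∈ R1))) →
        (∀ b ∈ Q, ∀ i ∈ T, ¬((i = 1 ∧ b ∈ R2) ∨ (i = 2 ∧ b ∈ L2))) →
        (∀ i ∈ T, ∀ j ∈ T, ¬(i.val + 1 = j.val ∨ j.val + 1 = i.val)) →
        IsIndep (mGraph G Gt L1 R1 L2 R2) (P.map inα ∪ Q.map inβ ∪ T.map ⟨Sum.inr, Sum.inr_injective⟩) := by
      intro P Q T h1 h2 h3 h4 h5 h6 x hx y hy hadj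
      simp only [Finset.mem_union, Finset.mem_map, inα, inβ,
        Function.Embedding.coeFn_mk] at hx hy
      rcases hx with (⟨a, ha, rfl⟩ | ⟨b, hb, rfl⟩) | ⟨i, hi, rfl⟩ <;>
        rcases hy with (⟨c, hc, rfl⟩ | ⟨d, hd, rfl⟩) | ⟨j, hj, rfl⟩
      · exact h1 a ha c hc hadj
      · exact h3 a ha d hd hadj
      · exact h4 a ha j hj hadj
      · exact h3 c hc b hb hadj
      · exact h2 b hb d hd hadj
      · exact h5 b hb j hj hadj
      · exact h4 c hc i hi hadj
      · exact h5 d hd i hi hadj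
      · exact h6 i hi j hj hadj
    have e6 : ∀ i ∈ ({0, 2} : Finset (Fin 4)), ∀ j ∈ ({0, 2} : Finset (Fin 4)),
        ¬(i.val + 1 = j.val ∨ j.val + 1 = i.val) := by decide
    have e6' : ∀ i ∈ ({1, 3} : Finset (Fin 4)), ∀ j ∈ ({1, 3} : Finset (Fin 4)),
        ¬(i.val + 1 = j.val ∨ j.val + 1 = i.val) := by decide
    have e6'' : ∀ i ∈ ({0, 3} : Finset (Fin 4)), ∀ j ∈ ({0, 3} : Finset (Fin 4)),
        ¬(i.val + 1 = j.val ∨ j.val + 1 = i.val) := by decide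
    rintro (rfl | rfl | rfl | rfl | ⟨A, hA, hA1, hA2, rfl⟩ | ⟨B, hB, hB1, hB2, rfl⟩)
    · refine ⟨?_, ?_⟩
      · have h := hindep L1 R2 {0, 2} (fun a ha c hc => hbG.not_adj_left ha hc)
          (fun b hb d hd => hbGt.not_adj_right hb hd)
          (fun a ha b hb h => by
            rcases h with ⟨h1, h2⟩ | ⟨h1, h2⟩
            · exact hbGt.not_mem_left hb h2
            · exact hbG.not_mem_right ha h1)
          (fun a ha i hi h => by
            rcases h with ⟨rfl, h2⟩ | ⟨rfl, h2⟩
            · exact absurd hi (by decide)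
            · exact hbG.not_mem_right ha h2)
          (fun b hb i hi h => by
            rcases h with ⟨rfl, h2⟩ | ⟨rfl, h2⟩
            · exact absurd hi (by decide)
            · exact hbGt.not_mem_left hb h2)
          e6
        simpa using h
      · intro v hv
        rcases v with (a | b) | j
        · have haL : a ∉ L1 := fun h =>
            hv (Finset.mem_union_left _ (Finset.mem_union_left _ (Finset.mem_map.2 ⟨a, h, rfl⟩)))
          exact ⟨Sum.inr 2, by simp, Or.inr ⟨rfl, (hbG.mem_or a).resolve_left haL⟩⟩
        · have hbR : b ∉ R2 := fun h =>
            hv (Finset.mem_union_left _ (Finset.mem_union_right _ (Finset.mem_map.2 ⟨b, h, rfl⟩)))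
          exact ⟨Sum.inr 2, by simp, Or.inr ⟨rfl, (hbGt.mem_or b).resolve_right hbR⟩⟩
        · fin_cases j
          · exact absurd (by simp) hv
          · exact ⟨Sum.inr 0, by simp, (mG_uu G Gt L1 R1 L2 R2 _ _).2 (by decide)⟩
          · exact absurd (by simp) hv
          · exact ⟨Sum.inr 2, by simp, (mG_uu G Gt L1 R1 L2 R2 _ _).2 (by decide)⟩
    · refine ⟨?_, ?_⟩
      · have h := hindep R1 L2 {1, 3} (fun a ha c hc => hbG.not_adj_right ha hc)
          (fun b hb d hd => hbGt.not_adj_left hb hd)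
          (fun a ha b hb h => by
            rcases h with ⟨h1, h2⟩ | ⟨h1, h2⟩
            · exact hbG.not_mem_left ha h1
            · exact hbGt.not_mem_right hb h2)
          (fun a ha i hi h => by
            rcases h with ⟨rfl, h2⟩ | ⟨rfl, h2⟩
            · exact hbG.not_mem_left ha h2
            · exact absurd hi (by decide))
          (fun b hb i hi h => by
            rcases h with ⟨rfl, h2⟩ | ⟨rfl, h2⟩
            · exact hbGt.not_mem_right hb h2
            · exact absurd hi (by decide))
          e6'
        simpa using h
      · intro v hv
        rcases v with (a | b) | j
        · have haR : a ∉ R1 := fun h =>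
            hv (Finset.mem_union_left _ (Finset.mem_union_left _ (Finset.mem_map.2 ⟨a, h, rfl⟩)))
          exact ⟨Sum.inr 1, by simp, Or.inl ⟨rfl, (hbG.mem_or a).resolve_right haR⟩⟩
        · have hbL : b ∉ L2 := fun h =>
            hv (Finset.mem_union_left _ (Finset.mem_union_right _ (Finset.mem_map.2 ⟨b, h, rfl⟩)))
          exact ⟨Sum.inr 1, by simp, Or.inl ⟨rfl, (hbGt.mem_or b).resolve_left hbL⟩⟩
        · fin_cases j
          · exact ⟨Sum.inr 1, by simp, (mG_uu G Gt L1 R1 L2 R2 _ _).2 (by decide)⟩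
          · exact absurd (by simp) hv
          · exact ⟨Sum.inr 1, by simp, (mG_uu G Gt L1 R1 L2 R2 _ _).2 (by decide)⟩
          · exact absurd (by simp) hv
    · refine ⟨?_, ?_⟩
      · have h := hindep L1 R2 {0, 3} (fun a ha c hc => hbG.not_adj_left ha hc)
          (fun b hb d hd => hbGt.not_adj_right hb hd)
          (fun a ha b hb h => by
            rcases h with ⟨h1, h2⟩ | ⟨h1, h2⟩
            · exact hbGt.not_mem_left hb h2
            · exact hbG.not_mem_right ha h1)
          (fun a ha i hi h => by
            rcases h with ⟨rfl, h2⟩ | ⟨rfl, h2⟩ <;> exact absurd hi (by decide))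
          (fun b hb i hi h => by
            rcases h with ⟨rfl, h2⟩ | ⟨rfl, h2⟩ <;> exact absurd hi (by decide))
          e6''
        simpa using h
      · intro v hv
        rcases v with (a | b) | j
        · have haL : a ∉ L1 := fun h =>
            hv (Finset.mem_union_left _ (Finset.mem_union_left _ (Finset.mem_map.2 ⟨a, h, rfl⟩)))
          have haR := (hbG.mem_or a).resolve_left haL
          obtain ⟨c, hc⟩ := hisoG a
          have hcL := hbG.mem_left_of_adj hc haR
          exact ⟨Sum.inl (Sum.inl c),
            Finset.mem_union_left _ (Finset.mem_union_left _ (Finset.mem_map.2 ⟨c, hcL, rfl⟩)), hc⟩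
        · have hbR : b ∉ R2 := fun h =>
            hv (Finset.mem_union_left _ (Finset.mem_union_right _ (Finset.mem_map.2 ⟨b, h, rfl⟩)))
          have hbL := (hbGt.mem_or b).resolve_right hbR
          obtain ⟨d, hd⟩ := hisoGt b
          have hdR := hbGt.mem_right_of_adj hd hbL
          exact ⟨Sum.inl (Sum.inr d),
            Finset.mem_union_left _ (Finset.mem_union_right _ (Finset.mem_map.2 ⟨d, hdR, rfl⟩)), hd⟩
        · fin_cases j
          · exact absurd (by simp) hv
          · exact ⟨Sum.inr 0, by simp, (mG_uu G Gt L1 R1 L2 R2 _ _).2 (by decide)⟩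
          · exact ⟨Sum.inr 3, by simp, (mG_uu G Gt L1 R1 L2 R2 _ _).2 (by decide)⟩
          · exact absurd (by simp) hv
    · refine ⟨?_, ?_⟩
      · have h := hindep R1 L2 {0, 3} (fun a ha c hc => hbG.not_adj_right ha hc)
          (fun b hb d hd => hbGt.not_adj_left hb hd)
          (fun a ha b hb h => by
            rcases h with ⟨h1, h2⟩ | ⟨h1, h2⟩
            · exact hbG.not_mem_left ha h1
            · exact hbGt.not_mem_right hb h2)
          (fun a ha i hi h => by
            rcases h with ⟨rfl, h2⟩ | ⟨rfl, h2⟩ <;> exact absurd hi (by decide))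
          (fun b hb i hi h => by
            rcases h with ⟨rfl, h2⟩ | ⟨rfl, h2⟩ <;> exact absurd hi (by decide))
          e6''
        simpa using h
      · intro v hv
        rcases v with (a | b) | j
        · have haR : a ∉ R1 := fun h =>
            hv (Finset.mem_union_left _ (Finset.mem_union_left _ (Finset.mem_map.2 ⟨a, h, rfl⟩)))
          have haL := (hbG.mem_or a).resolve_right haR
          obtain ⟨c, hc⟩ := hisoG a
          have hcR := hbG.mem_right_of_adj hc haL
          exact ⟨Sum.inl (Sum.inl c),
            Finset.mem_union_left _ (Finset.mem_union_left _ (Finset.mem_map.2 ⟨c, hcR, rfl⟩)), hc⟩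
        · have hbL : b ∉ L2 := fun h =>
            hv (Finset.mem_union_left _ (Finset.mem_union_right _ (Finset.mem_map.2 ⟨b, h, rfl⟩)))
          have hbR := (hbGt.mem_or b).resolve_left hbL
          obtain ⟨d, hd⟩ := hisoGt b
          have hdL := hbGt.mem_left_of_adj hd hbR
          exact ⟨Sum.inl (Sum.inr d),
            Finset.mem_union_left _ (Finset.mem_union_right _ (Finset.mem_map.2 ⟨d, hdL, rfl⟩)), hd⟩
        · fin_cases j
          · exact absurd (by simp) hv
          · exact ⟨Sum.inr 0, by simp, (mG_uu G Gt L1 R1 L2 R2 _ _).2 (by decide)⟩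
          · exact ⟨Sum.inr 3, by simp, (mG_uu G Gt L1 R1 L2 R2 _ _).2 (by decide)⟩
          · exact absurd (by simp) hv
    · rw [isMaxIndep_iff] at hA
      refine ⟨?_, ?_⟩
      · have h := hindep A ∅ {0, 3} (fun a ha c hc => hA.1 a ha c hc)
          (fun b hb => absurd hb (Finset.notMem_empty b))
          (fun a ha b hb => absurd hb (Finset.notMem_empty b))
          (fun a ha i hi h => by
            rcases h with ⟨rfl, h2⟩ | ⟨rfl, h2⟩ <;> exact absurd hi (by decide))
          (fun b hb => absurd hb (Finset.notMem_empty b))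
          e6''
        simpa using h
      · intro v hv
        rcases v with (a | b) | j
        · have haA : a ∉ A := fun h =>
            hv (Finset.mem_union_left _ (Finset.mem_map.2 ⟨a, h, rfl⟩))
          obtain ⟨c, hcA, hadj⟩ := hA.2 a haA
          exact ⟨Sum.inl (Sum.inl c),
            Finset.mem_union_left _ (Finset.mem_map.2 ⟨c, hcA, rfl⟩), hadj⟩
        · rcases hbGt.mem_or b with hb | hb
          · obtain ⟨x, hx⟩ := hA1
            rw [Finset.mem_inter] at hx
            exact ⟨Sum.inl (Sum.inl x),
              Finset.mem_union_left _ (Finset.mem_map.2 ⟨x, hx.1, rfl⟩), Or.inl ⟨hx.2, hb⟩⟩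
          · obtain ⟨x, hx⟩ := hA2
            rw [Finset.mem_inter] at hx
            exact ⟨Sum.inl (Sum.inl x),
              Finset.mem_union_left _ (Finset.mem_map.2 ⟨x, hx.1, rfl⟩), Or.inr ⟨hx.2, hb⟩⟩
        · fin_cases j
          · exact absurd (by simp) hv
          · exact ⟨Sum.inr 0, by simp, (mG_uu G Gt L1 R1 L2 R2 _ _).2 (by decide)⟩
          · exact ⟨Sum.inr 3, by simp, (mG_uu G Gt L1 R1 L2 R2 _ _).2 (by decide)⟩
          · exact absurd (by simp) hv
    · rw [isMaxIndep_iff] at hB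
      refine ⟨?_, ?_⟩
      · have h := hindep ∅ B {0, 3}
          (fun a ha => absurd ha (Finset.notMem_empty a))
          (fun b hb d hd => hB.1 b hb d hd)
          (fun a ha => absurd ha (Finset.notMem_empty a))
          (fun a ha => absurd ha (Finset.notMem_empty a))
          (fun b hb i hi h => by
            rcases h with ⟨rfl, h2⟩ | ⟨rfl, h2⟩ <;> exact absurd hi (by decide))
          e6''
        simpa using h
      · intro v hv
        rcases v with (a | b) | j
        · rcases hbG.mem_or a with ha | ha
          · obtain ⟨x, hx⟩ := hB1
            rw [Finset.mem_inter] at hx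
            exact ⟨Sum.inl (Sum.inr x),
              Finset.mem_union_left _ (Finset.mem_map.2 ⟨x, hx.1, rfl⟩), Or.inl ⟨ha, hx.2⟩⟩
          · obtain ⟨x, hx⟩ := hB2
            rw [Finset.mem_inter] at hx
            exact ⟨Sum.inl (Sum.inr x),
              Finset.mem_union_left _ (Finset.mem_map.2 ⟨x, hx.1, rfl⟩), Or.inr ⟨ha, hx.2⟩⟩
        · have hbB : b ∉ B := fun h =>
            hv (Finset.mem_union_left _ (Finset.mem_map.2 ⟨b, h, rfl⟩))
          obtain ⟨d, hdB, hadj⟩ := hB.2 b hbB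
          exact ⟨Sum.inl (Sum.inr d),
            Finset.mem_union_left _ (Finset.mem_map.2 ⟨d, hdB, rfl⟩), hadj⟩
        · fin_cases j
          · exact absurd (by simp) hv
          · exact ⟨Sum.inr 0, by simp, (mG_uu G Gt L1 R1 L2 R2 _ _).2 (by decide)⟩
          · exact ⟨Sum.inr 3, by simp, (mG_uu G Gt L1 R1 L2 R2 _ _).2 (by decide)⟩
          · exact absurd (by simp) hv



lemma bip_maxIndep_left {V : Type*} {G : SimpleGraph V} {L R : Finset V}
    (hb : IsBipartition G L R) (hiso : NoIsolated G) : IsMaxIndep G L := by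
  rw [isMaxIndep_iff]
  refine ⟨fun a ha c hc => hb.not_adj_left ha hc, fun v hv => ?_⟩
  obtain ⟨u, hu⟩ := hiso v
  exact ⟨u, hb.mem_left_of_adj hu ((hb.mem_or v).resolve_left hv), hu⟩

lemma bip_maxIndep_right {V : Type*} {G : SimpleGraph V} {L R : Finset V}
    (hb : IsBipartition G L R) (hiso : NoIsolated G) : IsMaxIndep G R := by
  rw [isMaxIndep_iff]
  refine ⟨fun a ha c hc => hb.not_adj_right ha hc, fun v hv => ?_⟩
  obtain ⟨u, hu⟩ := hiso v
  exact ⟨u, hb.mem_right_of_adj hu ((hb.mem_or v).resolve_right hv), hu⟩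

lemma maxIndep_meets {V : Type*} [DecidableEq V] {G : SimpleGraph V} {L R : Finset V}
    (hb : IsBipartition G L R) (hiso : NoIsolated G) {A : Finset V} (hA : IsMaxIndep G A)
    (h1 : A ≠ L) (h2 : A ≠ R) : (A ∩ L).Nonempty ∧ (A ∩ R).Nonempty := by
  classical
  constructor
  · rw [Finset.nonempty_iff_ne_empty]
    intro he
    apply h2
    refine hA.2 R (bip_maxIndep_right hb hiso).1 ?_
    intro a ha
    rcases hb.mem_or a with h | h
    · exact absurd (Finset.mem_inter.2 ⟨ha, h⟩) (by simp [he])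
    · exact h
  · rw [Finset.nonempty_iff_ne_empty]
    intro he
    apply h1
    refine hA.2 L (bip_maxIndep_left hb hiso).1 ?_
    intro a ha
    rcases hb.mem_or a with h | h
    · exact h
    · exact absurd (Finset.mem_inter.2 ⟨ha, h⟩) (by simp [he])

lemma mainCase {α β : Type*} [DecidableEq α] [DecidableEq β] [Fintype α] [Fintype β]
    (G : SimpleGraph α) (Gt : SimpleGraph β) (L1 R1 : Finset α) (L2 R2 : Finset β)
    (hbG : IsBipartition G L1 R1) (hbGt : IsBipartition Gt L2 R2)
    (hisoG : NoIsolated G) (hisoGt : NoIsolated Gt)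
    (hL1 : L1.Nonempty) (hR1 : R1.Nonempty) (hL2 : L2.Nonempty) (hR2 : R2.Nonempty) :
    ∃ G' : SimpleGraph ((α ⊕ β) ⊕ Fin 4), IsBipartite G' ∧ NoIsolated G' ∧
      iotaM G' = iotaM G + iotaM Gt := by
  classical
  refine ⟨mGraph G Gt L1 R1 L2 R2, ?_, ?_, ?_⟩
  · refine ⟨L1.map inα ∪ R2.map inβ ∪ {Sum.inr 0, Sum.inr 2},
      R1.map inα ∪ L2.map inβ ∪ {Sum.inr 1, Sum.inr 3}, ?_, ?_, ?_⟩
    · rw [Finset.disjoint_left]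
      intro x hx hx'
      simp only [Finset.mem_union, Finset.mem_map, Finset.mem_insert, Finset.mem_singleton,
        inα, inβ, Function.Embedding.coeFn_mk] at hx hx'
      rcases hx with (⟨a, ha, rfl⟩ | ⟨b, hb, rfl⟩) | rfl | rfl <;>
        rcases hx' with (⟨c, hc, h⟩ | ⟨d, hd, h⟩) | h | h <;>
        first
          | (have he : c = a := by simpa using h
             exact hbG.not_mem_right ha (he ▸ hc))
          | (have he : d = b := by simpa using h
             exact hbGt.not_mem_right (he ▸ hd) hb)
          | exact absurd h (by simp)
    · intro v
      rcases v with (a | b) | j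
      · rcases hbG.mem_or a with h | h
        · exact Or.inl (Finset.mem_union_left _ (Finset.mem_union_left _ (Finset.mem_map.2 ⟨a, h, rfl⟩)))
        · exact Or.inr (Finset.mem_union_left _ (Finset.mem_union_left _ (Finset.mem_map.2 ⟨a, h, rfl⟩)))
      · rcases hbGt.mem_or b with h | h
        · exact Or.inr (Finset.mem_union_left _ (Finset.mem_union_right _ (Finset.mem_map.2 ⟨b, h, rfl⟩)))
        · exact Or.inl (Finset.mem_union_left _ (Finset.mem_union_right _ (Finset.mem_map.2 ⟨b, h, rfl⟩)))
      · fin_cases j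
        · exact Or.inl (by simp)
        · exact Or.inr (by simp)
        · exact Or.inl (by simp)
        · exact Or.inr (by simp)
    · intro x y hadj
      rcases x with (a | b) | i <;> rcases y with (c | d) | j
      · rcases hbG.2.2 a c hadj with ⟨h1, h2⟩ | ⟨h1, h2⟩
        · exact Or.inl ⟨Finset.mem_union_left _ (Finset.mem_union_left _ (Finset.mem_map.2 ⟨a, h1, rfl⟩)),
            Finset.mem_union_left _ (Finset.mem_union_left _ (Finset.mem_map.2 ⟨c, h2, rfl⟩))⟩
        · exact Or.inr ⟨Finset.mem_union_left _ (Finset.mem_union_left _ (Finset.mem_map.2 ⟨a, h1, rfl⟩)),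
            Finset.mem_union_left _ (Finset.mem_union_left _ (Finset.mem_map.2 ⟨c, h2, rfl⟩))⟩
      · rcases hadj with ⟨h1, h2⟩ | ⟨h1, h2⟩
        · exact Or.inl ⟨Finset.mem_union_left _ (Finset.mem_union_left _ (Finset.mem_map.2 ⟨a, h1, rfl⟩)),
            Finset.mem_union_left _ (Finset.mem_union_right _ (Finset.mem_map.2 ⟨d, h2, rfl⟩))⟩
        · exact Or.inr ⟨Finset.mem_union_left _ (Finset.mem_union_left _ (Finset.mem_map.2 ⟨a, h1, rfl⟩)),
            Finset.mem_union_left _ (Finset.mem_union_right _ (Finset.mem_map.2 ⟨d, h2, rfl⟩))⟩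
      · rcases hadj with ⟨rfl, h2⟩ | ⟨rfl, h2⟩
        · exact Or.inl ⟨Finset.mem_union_left _ (Finset.mem_union_left _ (Finset.mem_map.2 ⟨a, h2, rfl⟩)), by simp⟩
        · exact Or.inr ⟨Finset.mem_union_left _ (Finset.mem_union_left _ (Finset.mem_map.2 ⟨a, h2, rfl⟩)), by simp⟩
      · rcases hadj with ⟨h1, h2⟩ | ⟨h1, h2⟩
        · exact Or.inr ⟨Finset.mem_union_left _ (Finset.mem_union_right _ (Finset.mem_map.2 ⟨b, h2, rfl⟩)),
            Finset.mem_union_left _ (Finset.mem_union_left _ (Finset.mem_map.2 ⟨c, h1, rfl⟩))⟩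
        · exact Or.inl ⟨Finset.mem_union_left _ (Finset.mem_union_right _ (Finset.mem_map.2 ⟨b, h2, rfl⟩)),
            Finset.mem_union_left _ (Finset.mem_union_left _ (Finset.mem_map.2 ⟨c, h1, rfl⟩))⟩
      · rcases hbGt.2.2 b d hadj with ⟨h1, h2⟩ | ⟨h1, h2⟩
        · exact Or.inr ⟨Finset.mem_union_left _ (Finset.mem_union_right _ (Finset.mem_map.2 ⟨b, h1, rfl⟩)),
            Finset.mem_union_left _ (Finset.mem_union_right _ (Finset.mem_map.2 ⟨d, h2, rfl⟩))⟩
        · exact Or.inl ⟨Finset.mem_union_left _ (Finset.mem_union_right _ (Finset.mem_map.2 ⟨b, h1, rfl⟩)),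
            Finset.mem_union_left _ (Finset.mem_union_right _ (Finset.mem_map.2 ⟨d, h2, rfl⟩))⟩
      · rcases hadj with ⟨rfl, h2⟩ | ⟨rfl, h2⟩
        · exact Or.inl ⟨Finset.mem_union_left _ (Finset.mem_union_right _ (Finset.mem_map.2 ⟨b, h2, rfl⟩)), by simp⟩
        · exact Or.inr ⟨Finset.mem_union_left _ (Finset.mem_union_right _ (Finset.mem_map.2 ⟨b, h2, rfl⟩)), by simp⟩
      · rcases hadj with ⟨rfl, h2⟩ | ⟨rfl, h2⟩
        · exact Or.inr ⟨by simp, Finset.mem_union_left _ (Finset.mem_union_left _ (Finset.mem_map.2 ⟨c, h2, rfl⟩))⟩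
        · exact Or.inl ⟨by simp, Finset.mem_union_left _ (Finset.mem_union_left _ (Finset.mem_map.2 ⟨c, h2, rfl⟩))⟩
      · rcases hadj with ⟨rfl, h2⟩ | ⟨rfl, h2⟩
        · exact Or.inr ⟨by simp, Finset.mem_union_left _ (Finset.mem_union_right _ (Finset.mem_map.2 ⟨d, h2, rfl⟩))⟩
        · exact Or.inl ⟨by simp, Finset.mem_union_left _ (Finset.mem_union_right _ (Finset.mem_map.2 ⟨d, h2, rfl⟩))⟩
      · have h := (mG_uu G Gt L1 R1 L2 R2 _ _).1 hadj
        fin_cases i <;> fin_cases j <;> simp_all <;> first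
          | (exact Or.inl ⟨by simp, by simp⟩)
          | (exact Or.inr ⟨by simp, by simp⟩)
  · intro v
    rcases v with (a | b) | j
    · obtain ⟨c, hc⟩ := hisoG a
      exact ⟨Sum.inl (Sum.inl c), hc⟩
    · obtain ⟨d, hd⟩ := hisoGt b
      exact ⟨Sum.inl (Sum.inr d), hd⟩
    · fin_cases j
      · exact ⟨Sum.inr 1, (mG_uu G Gt L1 R1 L2 R2 _ _).2 (by decide)⟩
      · exact ⟨Sum.inr 0, (mG_uu G Gt L1 R1 L2 R2 _ _).2 (by decide)⟩
      · exact ⟨Sum.inr 3, (mG_uu G Gt L1 R1 L2 R2 _ _).2 (by decide)⟩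
      · exact ⟨Sum.inr 2, (mG_uu G Gt L1 R1 L2 R2 _ _).2 (by decide)⟩
  · have hL1R1 : L1 ≠ R1 := by
      obtain ⟨x, hx⟩ := hL1
      exact fun h => hbG.not_mem_right hx (h ▸ hx)
    have hL2R2 : L2 ≠ R2 := by
      obtain ⟨x, hx⟩ := hL2
      exact fun h => hbGt.not_mem_right hx (h ▸ hx)
    have hmL1 := bip_maxIndep_left hbG hisoG
    have hmR1 := bip_maxIndep_right hbG hisoG
    have hmL2 := bip_maxIndep_left hbGt hisoGt
    have hmR2 := bip_maxIndep_right hbGt hisoGt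
    set f : Finset α → Finset ((α ⊕ β) ⊕ Fin 4) := fun A =>
      if A = L1 then L1.map inα ∪ R2.map inβ ∪ {Sum.inr 0, Sum.inr 2}
      else if A = R1 then R1.map inα ∪ L2.map inβ ∪ {Sum.inr 0, Sum.inr 3}
      else A.map inα ∪ {Sum.inr 0, Sum.inr 3} with hf
    set g : Finset β → Finset ((α ⊕ β) ⊕ Fin 4) := fun B =>
      if B = L2 then R1.map inα ∪ L2.map inβ ∪ {Sum.inr 1, Sum.inr 3}
      else if B = R2 then L1.map inα ∪ R2.map inβ ∪ {Sum.inr 0, Sum.inr 3}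
      else B.map inβ ∪ {Sum.inr 0, Sum.inr 3} with hg
    -- membership of u2 / u1 discriminates
    have hu2f : ∀ A, (Sum.inr 2 : (α ⊕ β) ⊕ Fin 4) ∈ f A ↔ A = L1 := by
      intro A
      simp only [hf]
      by_cases e1 : A = L1
      · simp only [if_pos e1]
        simp [inα, inβ, e1]
      · rw [if_neg e1]
        by_cases e2 : A = R1
        · rw [if_pos e2]
          simp [inα, inβ, e1]
        · rw [if_neg e2]
          simp [inα, e1]
    have hu1g : ∀ B, (Sum.inr 1 : (α ⊕ β) ⊕ Fin 4) ∈ g B ↔ B = L2 := by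
      intro B
      simp only [hg]
      by_cases e1 : B = L2
      · simp only [if_pos e1]
        simp [inα, inβ, e1]
      · rw [if_neg e1]
        by_cases e2 : B = R2
        · rw [if_pos e2]
          simp [inα, inβ, e1]
        · rw [if_neg e2]
          simp [inβ, e1]
    have hu2g : ∀ B, (Sum.inr 2 : (α ⊕ β) ⊕ Fin 4) ∉ g B := by
      intro B
      simp only [hg]
      by_cases e1 : B = L2
      · rw [if_pos e1]; simp [inα, inβ]
      · rw [if_neg e1]
        by_cases e2 : B = R2
        · rw [if_pos e2]; simp [inα, inβ]
        · rw [if_neg e2]; simp [inβ]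
    have hu1f : ∀ A, (Sum.inr 1 : (α ⊕ β) ⊕ Fin 4) ∉ f A := by
      intro A
      simp only [hf]
      by_cases e1 : A = L1
      · rw [if_pos e1]; simp [inα, inβ]
      · rw [if_neg e1]
        by_cases e2 : A = R1
        · rw [if_pos e2]; simp [inα, inβ]
        · rw [if_neg e2]; simp [inα]
    have hfL1 : f L1 = L1.map inα ∪ R2.map inβ ∪ {Sum.inr 0, Sum.inr 2} := by
      simp [hf]
    have hfR1 : f R1 = R1.map inα ∪ L2.map inβ ∪ {Sum.inr 0, Sum.inr 3} := by
      simp [hf, Ne.symm hL1R1]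
    have hfgen : ∀ A : Finset α, A ≠ L1 → A ≠ R1 →
        f A = A.map inα ∪ {Sum.inr 0, Sum.inr 3} := by
      intro A h1 h2
      simp [hf, h1, h2]
    have hgL2 : g L2 = R1.map inα ∪ L2.map inβ ∪ {Sum.inr 1, Sum.inr 3} := by
      simp [hg]
    have hgR2 : g R2 = L1.map inα ∪ R2.map inβ ∪ {Sum.inr 0, Sum.inr 3} := by
      simp [hg, Ne.symm hL2R2]
    have hggen : ∀ B : Finset β, B ≠ L2 → B ≠ R2 →
        g B = B.map inβ ∪ {Sum.inr 0, Sum.inr 3} := by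
      intro B h1 h2
      simp [hg, h1, h2]
    have hset : {s : Finset ((α ⊕ β) ⊕ Fin 4) | IsMaxIndep (mGraph G Gt L1 R1 L2 R2) s}
        = f '' {A | IsMaxIndep G A} ∪ g '' {B | IsMaxIndep Gt B} := by
      ext s
      simp only [Set.mem_setOf_eq, Set.mem_union, Set.mem_image,
        mGraph_maxIndep_iff G Gt L1 R1 L2 R2 hbG hbGt hisoG hisoGt hL1 hR1 hL2 hR2]
      constructor
      · rintro (rfl | rfl | rfl | rfl | ⟨A, hA, h1, h2, rfl⟩ | ⟨B, hB, h1, h2, rfl⟩)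
        · exact Or.inl ⟨L1, hmL1, by rw [hfL1]⟩
        · exact Or.inr ⟨L2, hmL2, by rw [hgL2]⟩
        · exact Or.inr ⟨R2, hmR2, by rw [hgR2]⟩
        · exact Or.inl ⟨R1, hmR1, by rw [hfR1]⟩
        · have e1 : A ≠ L1 := by
            obtain ⟨x, hx⟩ := h2
            rw [Finset.mem_inter] at hx
            intro he; rw [he] at hx; exact hbG.not_mem_right hx.1 hx.2
          have e2 : A ≠ R1 := by
            obtain ⟨x, hx⟩ := h1
            rw [Finset.mem_inter] at hx
            intro he; rw [he] at hx; exact hbG.not_mem_right hx.2 hx.1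
          exact Or.inl ⟨A, hA, hfgen A e1 e2⟩
        · have e1 : B ≠ L2 := by
            obtain ⟨x, hx⟩ := h2
            rw [Finset.mem_inter] at hx
            intro he; rw [he] at hx; exact hbGt.not_mem_right hx.1 hx.2
          have e2 : B ≠ R2 := by
            obtain ⟨x, hx⟩ := h1
            rw [Finset.mem_inter] at hx
            intro he; rw [he] at hx; exact hbGt.not_mem_right hx.2 hx.1
          exact Or.inr ⟨B, hB, hggen B e1 e2⟩
      · rintro (⟨A, hA, rfl⟩ | ⟨B, hB, rfl⟩)
        · by_cases e1 : A = L1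
          · left; rw [e1, hfL1]
          · by_cases e2 : A = R1
            · right; right; right; left; rw [e2, hfR1]
            · obtain ⟨m1, m2⟩ := maxIndep_meets hbG hisoG hA e1 e2
              right; right; right; right; left
              exact ⟨A, hA, m1, m2, hfgen A e1 e2⟩
        · by_cases e1 : B = L2
          · right; left; rw [e1, hgL2]
          · by_cases e2 : B = R2
            · right; right; left; rw [e2, hgR2]
            · obtain ⟨m1, m2⟩ := maxIndep_meets hbGt hisoGt hB e1 e2
              right; right; right; right; right
              exact ⟨B, hB, m1, m2, hggen B e1 e2⟩
    have hinjf : Set.InjOn f {A | IsMaxIndep G A} := by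
      intro A hA A' hA' he
      by_cases e1 : A = L1 <;> by_cases e1' : A' = L1
      · rw [e1, e1']
      · exfalso
        have h2 := (hu2f A).2 e1
        rw [he] at h2
        exact e1' ((hu2f A').1 h2)
      · exfalso
        have h2 := (hu2f A').2 e1'
        rw [← he] at h2
        exact e1 ((hu2f A).1 h2)
      · by_cases e2 : A = R1 <;> by_cases e2' : A' = R1
        · rw [e2, e2']
        · exfalso
          obtain ⟨y, hy⟩ := hL2
          have hm : Sum.inl (Sum.inr y) ∈ f A := by
            rw [e2, hfR1]; simp [inβ, hy]
          rw [he, hfgen A' e1' e2'] at hm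
          simp [inα] at hm
        · exfalso
          obtain ⟨y, hy⟩ := hL2
          have hm : Sum.inl (Sum.inr y) ∈ f A' := by
            rw [e2', hfR1]; simp [inβ, hy]
          rw [← he, hfgen A e1 e2] at hm
          simp [inα] at hm
        · have hfa : f A = A.map inα ∪ {Sum.inr 0, Sum.inr 3} := by
            simp only [hf]; rw [if_neg e1, if_neg e2]
          have hfa' : f A' = A'.map inα ∪ {Sum.inr 0, Sum.inr 3} := by
            simp only [hf]; rw [if_neg e1', if_neg e2']
          rw [hfa, hfa'] at he
          apply Finset.ext
          intro x
          simpa [inα] using Finset.ext_iff.1 he (Sum.inl (Sum.inl x))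
    have hinjg : Set.InjOn g {B | IsMaxIndep Gt B} := by
      intro B hB B' hB' he
      by_cases e1 : B = L2 <;> by_cases e1' : B' = L2
      · rw [e1, e1']
      · exfalso
        have h2 := (hu1g B).2 e1
        rw [he] at h2
        exact e1' ((hu1g B').1 h2)
      · exfalso
        have h2 := (hu1g B').2 e1'
        rw [← he] at h2
        exact e1 ((hu1g B).1 h2)
      · by_cases e2 : B = R2 <;> by_cases e2' : B' = R2
        · rw [e2, e2']
        · exfalso
          obtain ⟨x, hx⟩ := hL1
          have hm : Sum.inl (Sum.inl x) ∈ g B := by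
            rw [e2, hgR2]; simp [inα, hx]
          rw [he, hggen B' e1' e2'] at hm
          simp [inβ] at hm
        · exfalso
          obtain ⟨x, hx⟩ := hL1
          have hm : Sum.inl (Sum.inl x) ∈ g B' := by
            rw [e2', hgR2]; simp [inα, hx]
          rw [← he, hggen B e1 e2] at hm
          simp [inβ] at hm
        · have hga : g B = B.map inβ ∪ {Sum.inr 0, Sum.inr 3} := by
            simp only [hg]; rw [if_neg e1, if_neg e2]
          have hga' : g B' = B'.map inβ ∪ {Sum.inr 0, Sum.inr 3} := by
            simp only [hg]; rw [if_neg e1', if_neg e2']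
          rw [hga, hga'] at he
          apply Finset.ext
          intro x
          simpa [inβ] using Finset.ext_iff.1 he (Sum.inl (Sum.inr x))
    have hdisj : Disjoint (f '' {A | IsMaxIndep G A}) (g '' {B | IsMaxIndep Gt B}) := by
      rw [Set.disjoint_left]
      rintro x ⟨A, hA, rfl⟩ ⟨B, hB, he⟩
      by_cases e1 : A = L1
      · have h2 := (hu2f A).2 e1
        rw [← he] at h2
        exact hu2g B h2
      · by_cases e1' : B = L2
        · have h1 := (hu1g B).2 e1'
          rw [he] at h1
          exact hu1f A h1
        · by_cases e2 : A = R1 <;> by_cases e2' : B = R2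
          · obtain ⟨x, hx⟩ := hL1
            have hm : Sum.inl (Sum.inl x) ∈ g B := by
              rw [e2', hgR2]; simp [inα, hx]
            rw [he, e2, hfR1] at hm
            simp only [Finset.mem_union, Finset.mem_map, Finset.mem_insert, Finset.mem_singleton,
              inα, inβ, Function.Embedding.coeFn_mk] at hm
            rcases hm with (⟨c, hc, h⟩ | ⟨d, hd, h⟩) | h | h
            · have : c = x := by simpa using h
              exact hbG.not_mem_right hx (this ▸ hc)
            · simp at h
            · simp at h
            · simp at h
          · obtain ⟨x, hx⟩ := hR1
            have hm : Sum.inl (Sum.inl x) ∈ f A := by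
              rw [e2, hfR1]; simp [inα, hx]
            rw [← he, hggen B e1' e2'] at hm
            simp [inβ] at hm
          · obtain ⟨y, hy⟩ := hR2
            have hm : Sum.inl (Sum.inr y) ∈ g B := by
              rw [e2', hgR2]; simp [inβ, hy]
            rw [he, hfgen A e1 e2] at hm
            simp [inα] at hm
          · obtain ⟨x, hx⟩ := (maxIndep_meets hbG hisoG hA e1 e2).1
            rw [Finset.mem_inter] at hx
            have hm : Sum.inl (Sum.inl x) ∈ f A := by
              rw [hfgen A e1 e2]; simp [inα, hx.1]
            rw [← he, hggen B e1' e2'] at hm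
            simp [inβ] at hm
    rw [iotaM_eq_ncard, hset,
      Set.ncard_union_eq hdisj (Set.toFinite _) (Set.toFinite _),
      Set.ncard_image_of_injOn hinjf, Set.ncard_image_of_injOn hinjg,
      iotaM_eq_ncard G, iotaM_eq_ncard Gt]


lemma bip_sides_nonempty {V : Type*} [Nonempty V] {G : SimpleGraph V} {L R : Finset V}
    (hb : IsBipartition G L R) (hiso : NoIsolated G) : L.Nonempty ∧ R.Nonempty := by
  obtain ⟨v⟩ := ‹Nonempty V›
  obtain ⟨u, hu⟩ := hiso v
  rcases hb.2.2 v u hu with ⟨h1, h2⟩ | ⟨h1, h2⟩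
  · exact ⟨⟨v, h1⟩, ⟨u, h2⟩⟩
  · exact ⟨⟨u, h2⟩, ⟨v, h1⟩⟩

end Infra

/-- For any two bipartite graphs `G` and `G̃` without isolated vertices there is a
bipartite graph without isolated vertices with `ν(G) + ν(G̃) + 4` vertices and
exactly `ι_m(G) + ι_m(G̃)` maximal independent sets. -/
theorem stmt_13 {α β : Type*} [Fintype α] [Fintype β]
    (G : SimpleGraph α) (Gt : SimpleGraph β)
    (hbipG : IsBipartite G) (hisoG : NoIsolated G)
    (hbipGt : IsBipartite Gt) (hisoGt : NoIsolated Gt) :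
    ∃ (W : Type) (_ : Fintype W) (G' : SimpleGraph W),
      IsBipartite G' ∧ NoIsolated G' ∧
      Fintype.card W = Fintype.card α + Fintype.card β + 4 ∧
      iotaM G' = iotaM G + iotaM Gt := by
  classical
  by_cases hα : Nonempty α
  · by_cases hβ : Nonempty β
    · obtain ⟨L1, R1, hbG⟩ := hbipG
      obtain ⟨L2, R2, hbGt⟩ := hbipGt
      obtain ⟨hL1, hR1⟩ := bip_sides_nonempty hbG hisoG
      obtain ⟨hL2, hR2⟩ := bip_sides_nonempty hbGt hisoGt
      obtain ⟨G1, hb1, hi1, hcard⟩ :=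
        mainCase G Gt L1 R1 L2 R2 hbG hbGt hisoG hisoGt hL1 hR1 hL2 hR2
      have e : ((α ⊕ β) ⊕ Fin 4) ≃ Fin (Fintype.card α + Fintype.card β + 4) :=
        (Fintype.equivFin _).trans (finCongr (by simp))
      obtain ⟨G2, hb2, hi2, hio⟩ := transfer e G1
      exact ⟨Fin (Fintype.card α + Fintype.card β + 4), inferInstance, G2, hb2 hb1, hi2 hi1,
        by simp, by rw [hio, hcard]⟩
    · haveI : IsEmpty β := not_nonempty_iff.1 hβ
      obtain ⟨L1, R1, hbG⟩ := hbipG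
      obtain ⟨G1, hb1, hi1, hcard⟩ := plusOne G L1 R1 hbG hisoG
      have e : (α ⊕ Fin 4) ≃ Fin (Fintype.card α + Fintype.card β + 4) :=
        (Fintype.equivFin _).trans (finCongr (by simp))
      obtain ⟨G2, hb2, hi2, hio⟩ := transfer e G1
      refine ⟨Fin (Fintype.card α + Fintype.card β + 4), inferInstance, G2, hb2 hb1, hi2 hi1,
        by simp, ?_⟩
      rw [hio, hcard, iotaM_isEmpty Gt]
  · haveI : IsEmpty α := not_nonempty_iff.1 hα
    obtain ⟨L2, R2, hbGt⟩ := hbipGt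
    obtain ⟨G1, hb1, hi1, hcard⟩ := plusOne Gt L2 R2 hbGt hisoGt
    have e : (β ⊕ Fin 4) ≃ Fin (Fintype.card α + Fintype.card β + 4) :=
      (Fintype.equivFin _).trans (finCongr (by simp))
    obtain ⟨G2, hb2, hi2, hio⟩ := transfer e G1
    refine ⟨Fin (Fintype.card α + Fintype.card β + 4), inferInstance, G2, hb2 hb1, hi2 hi1,
      by simp, ?_⟩
    rw [hio, hcard, iotaM_isEmpty G]
    omega
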